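/- The Hardy model is not strongly contextual: let ψ₀ = (e₀⊗e₀ + e₁⊗e₀ + e₁⊗e₁)/√3 in EuclideanSpace ℂ (Fin 2 × Fin 2), and let vZ(a) = e_a and vX(a) = (e₀ + (−1)^a e₁)/√2 for a ∈ {0,1}. Then there exist a, b, u, w ∈ {0,1} such that all four inner products ⟪vZ(a)⊗vZ(b), ψ₀⟫, ⟪vZ(a)⊗vX(w), ψ₀⟫, ⟪vX(u)⊗vZ(b), ψ₀⟫, ⟪vX(u)⊗vX(w), ψ₀⟫ are nonzero; i.e. there is a global assignment of outcomes to all four measurements whose restriction to every measurement context is a possible (nonzero Born probability) event. -/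

import Mathlib

open scoped InnerProductSpace

noncomputable section

/-- Standard basis vectors `e₀, e₁` of `ℂ²`. -/
def e (a : Fin 2) : EuclideanSpace ℂ (Fin 2) := EuclideanSpace.single a 1

/-- Twofold product vector: `(φ⊗χ)(j,k) = φ(j)·χ(k)`. -/
def tp2 (φ χ : EuclideanSpace ℂ (Fin 2)) :
    EuclideanSpace ℂ (Fin 2 × Fin 2) :=
  WithLp.toLp 2 (fun p => φ p.1 * χ p.2)

/-- The Hardy state `ψ₀ = (e₀⊗e₀ + e₁⊗e₀ + e₁⊗e₁)/√3`. -/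
def ψ₀ : EuclideanSpace ℂ (Fin 2 × Fin 2) :=
  (Real.sqrt 3 : ℂ)⁻¹ • (tp2 (e 0) (e 0) + tp2 (e 1) (e 0) + tp2 (e 1) (e 1))

/-- Z-basis (computational basis) vectors `vZ(a) = e_a`. -/
def vZ (a : Fin 2) : EuclideanSpace ℂ (Fin 2) := e a

/-- X-basis vectors `vX(a) = (e₀ + (−1)^a e₁)/√2`. -/
def vX (a : Fin 2) : EuclideanSpace ℂ (Fin 2) :=
  (Real.sqrt 2 : ℂ)⁻¹ • (e 0 + ((-1 : ℂ) ^ (a : ℕ)) • e 1)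

/-- The Hardy model is not strongly contextual: there is a global assignment
of outcomes to all four measurements whose restriction to every measurement
context is a possible (nonzero-amplitude) event. -/
theorem hardy_not_strongly_contextual :
    ∃ a b u w : Fin 2,
      ⟪tp2 (vZ a) (vZ b), ψ₀⟫_ℂ ≠ 0 ∧
      ⟪tp2 (vZ a) (vX w), ψ₀⟫_ℂ ≠ 0 ∧
      ⟪tp2 (vX u) (vZ b), ψ₀⟫_ℂ ≠ 0 ∧
      ⟪tp2 (vX u) (vX w), ψ₀⟫_ℂ ≠ 0 := by
  refine ⟨1, 0, 0, 0, ?_, ?_, ?_, ?_⟩ <;>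
  · simp only [ψ₀, tp2, vZ, vX, e, inner, PiLp.inner_apply, RCLike.inner_apply,
      EuclideanSpace.single_apply, PiLp.smul_apply, PiLp.add_apply, smul_eq_mul,
      Fintype.sum_prod_type, Fin.sum_univ_two, PiLp.toLp_apply]
    have h2 : (Real.sqrt 2 : ℂ) ≠ 0 := by
      norm_cast; positivity
    have h3 : (Real.sqrt 3 : ℂ) ≠ 0 := by
      norm_cast; positivity
    field_simp
    all_goals norm_num
    all_goals (ring_nf; simp [h2])
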